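/- Let f : ℝⁿ × ℝᵐ → ℝ be twice continuously differentiable and let (x*,y*) be a local min-max critical point of f such that every eigenvalue of the matrix H = H(x*,y*) has nonzero real part. Then every eigenvalue λ of H satisfies Re(λ) < 0, and for every step size α with 0 < α < min over eigenvalues λ of H of (-Re(λ)/|λ|²), every eigenvalue of the Jacobian I + αH of the GDA map at (x*,y*) has modulus strictly less than 1; in particular (x*,y*) is GDA-stable for all sufficiently small α > 0. -/

import Mathlib

open Filter Topology MeasureTheory Matrix

noncomputable section

abbrev Euc (n : ℕ) : Type := EuclideanSpace ℝ (Fin n)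

/-- Partial gradient of `f` with respect to the first (`x`) variable. -/
noncomputable def gradX {n m : ℕ} (f : Euc n × Euc m → ℝ) (p : Euc n × Euc m) : Euc n :=
  gradient (fun x => f (x, p.2)) p.1

/-- Partial gradient of `f` with respect to the second (`y`) variable. -/
noncomputable def gradY {n m : ℕ} (f : Euc n × Euc m → ℝ) (p : Euc n × Euc m) : Euc m :=
  gradient (fun y => f (p.1, y)) p.2

/-- The GDA (gradient descent/ascent) update map with step size `α`:
`h(x,y) = (x - α ∇ₓ f(x,y), y + α ∇ᵧ f(x,y))`. -/
noncomputable def gda {n m : ℕ} (f : Euc n × Euc m → ℝ) (α : ℝ) (p : Euc n × Euc m) :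
    Euc n × Euc m :=
  (p.1 - α • gradX f p, p.2 + α • gradY f p)

/-- The standard basis vectors of `ℝⁿ × ℝᵐ`. -/
noncomputable def bVec (n m : ℕ) : Fin n ⊕ Fin m → Euc n × Euc m
  | Sum.inl i => (EuclideanSpace.single i 1, 0)
  | Sum.inr j => (0, EuclideanSpace.single j 1)

/-- Second directional derivative of `f` at `p` in directions `u, v`. -/
noncomputable def dD {n m : ℕ} (f : Euc n × Euc m → ℝ) (p u v : Euc n × Euc m) : ℝ :=
  fderiv ℝ (fun q => fderiv ℝ f q v) p u

/-- The matrix `H = [[-∇²ₓₓ f, -∇²ₓᵧ f], [∇²ᵧₓ f, ∇²ᵧᵧ f]]` of `f` at `p`. -/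
noncomputable def Hmat {n m : ℕ} (f : Euc n × Euc m → ℝ) (p : Euc n × Euc m) :
    Matrix (Fin n ⊕ Fin m) (Fin n ⊕ Fin m) ℝ :=
  Matrix.of fun i j =>
    (Sum.elim (fun _ => (-1 : ℝ)) (fun _ => (1 : ℝ)) i) * dD f p (bVec n m i) (bVec n m j)

/-- The set of complex eigenvalues of a real square matrix. -/
noncomputable def specC {ι : Type} [Fintype ι] [DecidableEq ι] (M : Matrix ι ι ℝ) : Set ℂ :=
  spectrum ℂ (M.map (Complex.ofReal))

/-- The Jacobian `I + αH` of the GDA update map at `p`. -/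
noncomputable def Jgda {n m : ℕ} (f : Euc n × Euc m → ℝ) (α : ℝ) (p : Euc n × Euc m) :
    Matrix (Fin n ⊕ Fin m) (Fin n ⊕ Fin m) ℝ :=
  1 + α • Hmat f p

/-- `(x*,y*)` is a local min-max point of `f`: there is a neighborhood `U` of `(x*,y*)`
such that `f(x*,y) ≤ f(x*,y*) ≤ f(x,y*)` for all `(x,y) ∈ U`. -/
def IsLocalMinMax {n m : ℕ} (f : Euc n × Euc m → ℝ) (p : Euc n × Euc m) : Prop :=
  ∃ U ∈ 𝓝 p, ∀ q ∈ U, f (p.1, q.2) ≤ f p ∧ f p ≤ f (q.1, p.2)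


section AuxProof

lemma aux_second_nonneg {g φ : ℝ → ℝ} {c : ℝ}
    (hg : ∀ t, HasDerivAt g (φ t) t) (hφ0 : φ 0 = 0)
    (hφ : HasDerivAt φ c 0) (hmin : IsLocalMin g 0) : 0 ≤ c := by
  by_contra hc
  push_neg at hc
  have hs : Tendsto (fun t : ℝ => φ t / t) (𝓝[≠] 0) (𝓝 c) := by
    have h := hasDerivAt_iff_tendsto_slope.mp hφ
    simpa [slope_fun_def_field, hφ0] using h
  have h1 : ∀ᶠ t in 𝓝[≠] (0:ℝ), φ t / t < c / 2 :=
    hs.eventually_lt_const (by linarith)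
  have h2 : ∀ᶠ t in 𝓝[>] (0:ℝ), φ t < 0 := by
    have h1' := h1.filter_mono (nhdsWithin_mono 0 (fun t ht => ne_of_gt ht))
    filter_upwards [h1', self_mem_nhdsWithin] with t ht ht'
    have hneg : φ t / t < 0 := lt_of_lt_of_le ht (by linarith)
    have := mul_lt_mul_of_pos_right hneg ht'
    rwa [div_mul_cancel₀ _ (ne_of_gt ht'), zero_mul] at this
  have h3 : ∀ᶠ t in 𝓝[>] (0:ℝ), g 0 ≤ g t := hmin.filter_mono nhdsWithin_le_nhds
  obtain ⟨δ, hδ, hsub⟩ := mem_nhdsGT_iff_exists_Ioo_subset.mp (h2.and h3)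
  have hδ0 : (0:ℝ) < δ := hδ
  set t0 : ℝ := δ / 2 with ht0
  have ht0pos : 0 < t0 := by positivity
  have ht0mem : t0 ∈ Set.Ioo (0:ℝ) δ := ⟨ht0pos, by linarith⟩
  have hanti : StrictAntiOn g (Set.Icc 0 t0) := by
    apply strictAntiOn_of_deriv_neg (convex_Icc 0 t0)
    · exact fun x _ => (hg x).continuousAt.continuousWithinAt
    · intro x hx
      rw [interior_Icc] at hx
      rw [(hg x).deriv]
      exact (hsub ⟨hx.1, by simp only [ht0] at hx; linarith [hx.2]⟩).1
  have hlt : g t0 < g 0 :=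
    hanti ⟨le_refl 0, le_of_lt ht0pos⟩ ⟨le_of_lt ht0pos, le_refl t0⟩ ht0pos
  exact absurd (hsub ht0mem).2 (not_le.mpr hlt)

variable {n m : ℕ} {f : Euc n × Euc m → ℝ}

lemma diff_fderiv (hf : ContDiff ℝ 2 f) (p : Euc n × Euc m) :
    DifferentiableAt ℝ (fderiv ℝ f) p :=
  ((hf.fderiv_right (m := 1) (by norm_num)).differentiable (by norm_num)) p

lemma dD_eq_fderiv2 (hf : ContDiff ℝ 2 f) (p u v : Euc n × Euc m) :
    dD f p u v = fderiv ℝ (fderiv ℝ f) p u v := by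
  unfold dD
  rw [fderiv_clm_apply (diff_fderiv hf p) (differentiableAt_const v)]
  simp

lemma dD_symm (hf : ContDiff ℝ 2 f) (p u v : Euc n × Euc m) :
    dD f p u v = dD f p v u := by
  rw [dD_eq_fderiv2 hf, dD_eq_fderiv2 hf]
  exact second_derivative_symmetric
    (fun y => (hf.differentiable two_ne_zero y).hasFDerivAt)
    (diff_fderiv hf p).hasFDerivAt u v

lemma line_derivs (hf : ContDiff ℝ 2 f) (p u : Euc n × Euc m) :
    (∀ t : ℝ, HasDerivAt (fun s : ℝ => f (p + s • u)) (fderiv ℝ f (p + t • u) u) t) ∧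
    HasDerivAt (fun t : ℝ => fderiv ℝ f (p + t • u) u) (dD f p u u) 0 := by
  have hL : ∀ t : ℝ, HasDerivAt (fun s : ℝ => p + s • u) u t := fun t => by
    simpa using ((hasDerivAt_id t).smul_const u).const_add p
  constructor
  · intro t
    exact ((hf.differentiable two_ne_zero (p + t • u)).hasFDerivAt).comp_hasDerivAt t (hL t)
  · have h1 : HasFDerivAt (fun q => fderiv ℝ f q u) ((fderiv ℝ (fderiv ℝ f) p).flip u) p := by
      have := (diff_fderiv hf p).hasFDerivAt.clm_apply (hasFDerivAt_const u p)
      simpa using this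
    have hL0 : p + (0:ℝ) • u = p := by simp
    rw [← hL0] at h1
    have h2 := h1.comp_hasDerivAt (0:ℝ) (hL 0)
    have : dD f p u u = (fderiv ℝ (fderiv ℝ f) p).flip u u := dD_eq_fderiv2 hf p u u
    rw [this]
    rw [hL0] at h2
    exact h2
lemma dD_x_nonneg (hf : ContDiff ℝ 2 f) {p : Euc n × Euc m}
    (hcrit : fderiv ℝ f p = 0) (hmm : IsLocalMinMax f p)
    (q : Euc n × Euc m) (hq : q.2 = 0) : 0 ≤ dD f p q q := by
  obtain ⟨hg, hφ⟩ := line_derivs hf p q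
  apply aux_second_nonneg hg _ hφ
  · -- IsLocalMin
    obtain ⟨U, hU, hUq⟩ := hmm
    have hcont : Continuous fun t : ℝ => p + t • q := by continuity
    have ht : Tendsto (fun t : ℝ => p + t • q) (𝓝 0) (𝓝 p) := by
      have := hcont.tendsto (0:ℝ); simpa using this
    have hev : ∀ᶠ t in 𝓝 (0:ℝ), p + t • q ∈ U := ht.eventually_mem hU
    filter_upwards [hev] with t htU
    have h2 : (p + t • q).2 = p.2 := by
      simp [Prod.snd_add, hq]
    have key := (hUq _ htU).2
    rw [show ((p + t • q).1, p.2) = p + t • q from by rw [← h2]] at key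
    simpa using key
  · simp [hcrit]

lemma dD_y_nonpos (hf : ContDiff ℝ 2 f) {p : Euc n × Euc m}
    (hcrit : fderiv ℝ f p = 0) (hmm : IsLocalMinMax f p)
    (q : Euc n × Euc m) (hq : q.1 = 0) : dD f p q q ≤ 0 := by
  obtain ⟨hg, hφ⟩ := line_derivs hf p q
  have h := aux_second_nonneg (g := fun t => -(f (p + t • q)))
      (φ := fun t => -(fderiv ℝ f (p + t • q) q)) (c := -(dD f p q q))
      (fun t => (hg t).neg) (by simp [hcrit]) hφ.neg ?_
  · linarith
  · -- IsLocalMin of -g i.e. local max of g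
    obtain ⟨U, hU, hUq⟩ := hmm
    have hcont : Continuous fun t : ℝ => p + t • q := by continuity
    have ht : Tendsto (fun t : ℝ => p + t • q) (𝓝 0) (𝓝 p) := by
      have := hcont.tendsto (0:ℝ); simpa using this
    have hev : ∀ᶠ t in 𝓝 (0:ℝ), p + t • q ∈ U := ht.eventually_mem hU
    filter_upwards [hev] with t htU
    have h2 : (p + t • q).1 = p.1 := by
      simp [Prod.fst_add, hq]
    have key := (hUq _ htU).1
    rw [show (p.1, (p + t • q).2) = p + t • q from by rw [← h2]] at key
    simpa using neg_le_neg key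

lemma quad_nonpos (hf : ContDiff ℝ 2 f) {p : Euc n × Euc m}
    (hcrit : fderiv ℝ f p = 0) (hmm : IsLocalMinMax f p)
    (u : Fin n ⊕ Fin m → ℝ) :
    ∑ i, ∑ j, u i * u j * Hmat f p i j ≤ 0 := by
  classical
  set B := fderiv ℝ (fderiv ℝ f) p with hBdef
  have hB : ∀ x y, dD f p x y = B x y := fun x y => dD_eq_fderiv2 hf p x y
  have hsymm : ∀ x y, B x y = B y x := fun x y => by
    rw [← hB, ← hB]; exact dD_symm hf p x y
  set s1 : Euc n × Euc m := ∑ i : Fin n, u (Sum.inl i) • bVec n m (Sum.inl i) with hs1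
  set s2 : Euc n × Euc m := ∑ j : Fin m, u (Sum.inr j) • bVec n m (Sum.inr j) with hs2
  have expand : ∀ {ι κ : Type} (sι : Finset ι) (sκ : Finset κ)
      (c : ι → ℝ) (d : κ → ℝ) (x : ι → Euc n × Euc m) (y : κ → Euc n × Euc m),
      B (∑ i ∈ sι, c i • x i) (∑ j ∈ sκ, d j • y j)
        = ∑ i ∈ sι, ∑ j ∈ sκ, c i * d j * B (x i) (y j) := by
    intro ι κ sι sκ c d x y
    simp only [map_sum, _root_.map_smul, ContinuousLinearMap.sum_apply,
      ContinuousLinearMap.smul_apply, smul_eq_mul, Finset.mul_sum, Finset.sum_mul]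
    rw [Finset.sum_comm]
    refine Finset.sum_congr rfl fun i _ => Finset.sum_congr rfl fun j _ => by ring
  -- split the big sum
  have hH : ∀ i j, Hmat f p i j
      = (Sum.elim (fun _ => (-1:ℝ)) (fun _ => (1:ℝ)) i) * B (bVec n m i) (bVec n m j) := by
    intro i j; simp only [Hmat, Matrix.of_apply, hB]
  have e0 : ∑ i, ∑ j, u i * u j * Hmat f p i j
      = (∑ i : Fin n, ∑ i' : Fin n,
          u (Sum.inl i) * u (Sum.inl i') * (-1 * B (bVec n m (Sum.inl i)) (bVec n m (Sum.inl i'))))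
        + (∑ i : Fin n, ∑ j : Fin m,
          u (Sum.inl i) * u (Sum.inr j) * (-1 * B (bVec n m (Sum.inl i)) (bVec n m (Sum.inr j))))
        + ((∑ j : Fin m, ∑ i : Fin n,
          u (Sum.inr j) * u (Sum.inl i) * (1 * B (bVec n m (Sum.inr j)) (bVec n m (Sum.inl i))))
        + (∑ j : Fin m, ∑ j' : Fin m,
          u (Sum.inr j) * u (Sum.inr j') * (1 * B (bVec n m (Sum.inr j)) (bVec n m (Sum.inr j'))))) := by
    simp only [hH]
    rw [Fintype.sum_sum_type]
    simp only [Fintype.sum_sum_type, Sum.elim_inl, Sum.elim_inr]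
    rw [Finset.sum_add_distrib, Finset.sum_add_distrib]
  have hcross : (∑ i : Fin n, ∑ j : Fin m,
          u (Sum.inl i) * u (Sum.inr j) * (-1 * B (bVec n m (Sum.inl i)) (bVec n m (Sum.inr j))))
        + (∑ j : Fin m, ∑ i : Fin n,
          u (Sum.inr j) * u (Sum.inl i) * (1 * B (bVec n m (Sum.inr j)) (bVec n m (Sum.inl i)))) = 0 := by
    rw [Finset.sum_comm]
    rw [← Finset.sum_add_distrib]
    refine Finset.sum_eq_zero fun a _ => ?_
    rw [← Finset.sum_add_distrib]
    refine Finset.sum_eq_zero fun b _ => ?_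
    rw [hsymm]
    ring
  have e1 : B s1 s1 = ∑ i : Fin n, ∑ i' : Fin n,
      u (Sum.inl i) * u (Sum.inl i') * B (bVec n m (Sum.inl i)) (bVec n m (Sum.inl i')) := by
    rw [hs1]; exact expand _ _ _ _ _ _
  have e2 : B s2 s2 = ∑ j : Fin m, ∑ j' : Fin m,
      u (Sum.inr j) * u (Sum.inr j') * B (bVec n m (Sum.inr j)) (bVec n m (Sum.inr j')) := by
    rw [hs2]; exact expand _ _ _ _ _ _
  have hs1snd : s1.2 = 0 := by
    rw [hs1, Prod.snd_sum]
    refine Finset.sum_eq_zero fun i _ => ?_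
    simp [bVec]
  have hs2fst : s2.1 = 0 := by
    rw [hs2, Prod.fst_sum]
    refine Finset.sum_eq_zero fun j _ => ?_
    simp [bVec]
  have h1 : 0 ≤ B s1 s1 := by rw [← hB]; exact dD_x_nonneg hf hcrit hmm s1 hs1snd
  have h2 : B s2 s2 ≤ 0 := by rw [← hB]; exact dD_y_nonpos hf hcrit hmm s2 hs2fst
  rw [e0]
  have e1' : (∑ i : Fin n, ∑ i' : Fin n,
          u (Sum.inl i) * u (Sum.inl i') * (-1 * B (bVec n m (Sum.inl i)) (bVec n m (Sum.inl i'))))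
      = -(B s1 s1) := by
    rw [e1, ← Finset.sum_neg_distrib]
    refine Finset.sum_congr rfl fun i _ => ?_
    rw [← Finset.sum_neg_distrib]
    refine Finset.sum_congr rfl fun j _ => ?_
    ring
  have e2' : (∑ j : Fin m, ∑ j' : Fin m,
          u (Sum.inr j) * u (Sum.inr j') * (1 * B (bVec n m (Sum.inr j)) (bVec n m (Sum.inr j'))))
      = B s2 s2 := by
    rw [e2]
    refine Finset.sum_congr rfl fun i _ => Finset.sum_congr rfl fun j _ => by ring
  rw [e1']
  linarith [hcross, e2']
lemma eig_exists {ι : Type} [Fintype ι] [DecidableEq ι] {M : Matrix ι ι ℂ} {μ : ℂ}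
    (hμ : μ ∈ spectrum ℂ M) : ∃ v : ι → ℂ, v ≠ 0 ∧ M *ᵥ v = μ • v := by
  have h1 : ¬ IsUnit (algebraMap ℂ (Matrix ι ι ℂ) μ - M) := spectrum.mem_iff.mp hμ
  rw [Matrix.isUnit_iff_isUnit_det] at h1
  have h2 : (algebraMap ℂ (Matrix ι ι ℂ) μ - M).det = 0 := by
    by_contra h; exact h1 (isUnit_iff_ne_zero.mpr h)
  obtain ⟨v, hv0, hv⟩ := (Matrix.exists_mulVec_eq_zero_iff).mpr h2
  refine ⟨v, hv0, ?_⟩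
  rw [Matrix.sub_mulVec] at hv
  have hA : (algebraMap ℂ (Matrix ι ι ℂ) μ) *ᵥ v = μ • v := by
    rw [Algebra.algebraMap_eq_smul_one, Matrix.smul_mulVec, Matrix.one_mulVec]
  rw [hA] at hv
  exact (sub_eq_zero.mp hv).symm

lemma spec_re_nonpos (hf : ContDiff ℝ 2 f) {p : Euc n × Euc m}
    (hcrit : fderiv ℝ f p = 0) (hmm : IsLocalMinMax f p) :
    ∀ μ ∈ specC (Hmat f p), μ.re ≤ 0 := by
  intro μ hμ
  obtain ⟨v, hv0, hv⟩ := eig_exists hμ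
  set a : Fin n ⊕ Fin m → ℝ := fun i => (v i).re with ha
  set b : Fin n ⊕ Fin m → ℝ := fun i => (v i).im with hb
  have hRe : ∀ i, ∑ j, Hmat f p i j * a j = μ.re * a i - μ.im * b i := by
    intro i
    have h := congrArg Complex.re (congrFun hv i)
    simp only [Matrix.mulVec, dotProduct, Matrix.map_apply, Pi.smul_apply, smul_eq_mul,
      Complex.re_sum, Complex.mul_re, Complex.ofReal_re, Complex.ofReal_im,
      zero_mul, sub_zero] at h
    simpa using h
  have hIm : ∀ i, ∑ j, Hmat f p i j * b j = μ.re * b i + μ.im * a i := by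
    intro i
    have h := congrArg Complex.im (congrFun hv i)
    simp only [Matrix.mulVec, dotProduct, Matrix.map_apply, Pi.smul_apply, smul_eq_mul,
      Complex.im_sum, Complex.mul_im, Complex.ofReal_re, Complex.ofReal_im,
      zero_mul, add_zero] at h
    simpa using h
  have qa := quad_nonpos hf hcrit hmm a
  have qb := quad_nonpos hf hcrit hmm b
  have key : μ.re * (∑ i, (a i ^ 2 + b i ^ 2)) ≤ 0 := by
    have e1 : ∑ i, ∑ j, a i * a j * Hmat f p i j = ∑ i, a i * (μ.re * a i - μ.im * b i) := by
      refine Finset.sum_congr rfl fun i _ => ?_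
      rw [← hRe i, Finset.mul_sum]
      refine Finset.sum_congr rfl fun j _ => by ring
    have e2 : ∑ i, ∑ j, b i * b j * Hmat f p i j = ∑ i, b i * (μ.re * b i + μ.im * a i) := by
      refine Finset.sum_congr rfl fun i _ => ?_
      rw [← hIm i, Finset.mul_sum]
      refine Finset.sum_congr rfl fun j _ => by ring
    rw [e1] at qa; rw [e2] at qb
    have : ∑ i, a i * (μ.re * a i - μ.im * b i) + ∑ i, b i * (μ.re * b i + μ.im * a i)
        = μ.re * (∑ i, (a i ^ 2 + b i ^ 2)) := by
      rw [← Finset.sum_add_distrib, Finset.mul_sum]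
      refine Finset.sum_congr rfl fun i _ => by ring
    linarith [this ▸ add_nonpos qa qb]
  have hN : 0 < ∑ i, (a i ^ 2 + b i ^ 2) := by
    obtain ⟨i, hi⟩ := Function.ne_iff.mp hv0
    refine Finset.sum_pos' (fun j _ => by positivity) ⟨i, Finset.mem_univ i, ?_⟩
    have := Complex.normSq_pos.mpr hi
    rw [Complex.normSq_apply] at this
    nlinarith
  nlinarith
lemma specJ_mem {p : Euc n × Euc m} {α : ℝ} (hα : α ≠ 0) {ν : ℂ} :
    ν ∈ specC (Jgda f α p) ↔ ∃ μ ∈ specC (Hmat f p), ν = 1 + (α:ℂ) * μ := by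
  have hα' : (α:ℂ) ≠ 0 := by exact_mod_cast hα
  have hmap : (Jgda f α p).map (Complex.ofReal)
      = algebraMap ℂ (Matrix (Fin n ⊕ Fin m) (Fin n ⊕ Fin m) ℂ) 1
        + (Units.mk0 (α:ℂ) hα') • (Hmat f p).map Complex.ofReal := by
    unfold Jgda
    ext i j
    simp [Matrix.map_apply, Matrix.one_apply, Matrix.algebraMap_matrix_apply, apply_ite]
  rw [specC, hmap, ← spectrum.singleton_add_eq, spectrum.unit_smul_eq_smul]
  constructor
  · rintro ⟨x, hx, y, hy, rfl⟩
    rw [Set.mem_singleton_iff] at hx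
    obtain ⟨μ, hμ, rfl⟩ := hy
    exact ⟨μ, hμ, by rw [hx]; simp [Units.smul_def]⟩
  · rintro ⟨μ, hμ, rfl⟩
    exact ⟨1, rfl, (Units.mk0 (α:ℂ) hα') • μ, Set.smul_mem_smul_set hμ, by simp [Units.smul_def]⟩

end AuxProof

/-- Let `(x*,y*)` be a local min-max critical point of a twice
continuously differentiable `f` such that every eigenvalue of `H = H(x*,y*)` has
nonzero real part.  Then every eigenvalue `λ` of `H` satisfies `Re(λ) < 0`; for every
step size `α` with `0 < α < minₗ (-Re(λ)/|λ|²)` every eigenvalue of the GDA Jacobian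
`I + αH` has modulus less than `1`; in particular `(x*,y*)` is GDA-stable for all
sufficiently small `α > 0`. -/
theorem localMinMax_nonzero_re_gda_stable {n m : ℕ} (f : Euc n × Euc m → ℝ)
    (hf : ContDiff ℝ 2 f)
    (pstar : Euc n × Euc m) (hcrit : fderiv ℝ f pstar = 0)
    (hmm : IsLocalMinMax f pstar)
    (hre : ∀ μ ∈ specC (Hmat f pstar), μ.re ≠ 0) :
    (∀ μ ∈ specC (Hmat f pstar), μ.re < 0) ∧
    (∀ α : ℝ, 0 < α → (∀ μ ∈ specC (Hmat f pstar), α < -μ.re / ‖μ‖ ^ 2) →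
      ∀ ν ∈ specC (Jgda f α pstar), ‖ν‖ < 1) ∧
    ∃ β > (0 : ℝ), ∀ α : ℝ, 0 < α → α < β → ∀ ν ∈ specC (Jgda f α pstar), ‖ν‖ ≤ 1 := by
  have hre' : ∀ μ ∈ specC (Hmat f pstar), μ.re < 0 := fun μ hμ =>
    lt_of_le_of_ne (spec_re_nonpos hf hcrit hmm μ hμ) (hre μ hμ)
  have hpart2 : ∀ α : ℝ, 0 < α → (∀ μ ∈ specC (Hmat f pstar), α < -μ.re / ‖μ‖ ^ 2) →
      ∀ ν ∈ specC (Jgda f α pstar), ‖ν‖ < 1 := by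
    intro α hα hbound ν hν
    obtain ⟨μ, hμ, rfl⟩ := (specJ_mem (ne_of_gt hα)).mp hν
    have hμre := hre' μ hμ
    have hb := hbound μ hμ
    have hnorm : 0 < ‖μ‖ := by
      rw [norm_pos_iff]
      intro h; rw [h] at hμre; simp at hμre
    have hb' : α * ‖μ‖ ^ 2 < -μ.re := (lt_div_iff₀ (by positivity)).mp hb
    have hre1 : ((1:ℂ) + (α:ℂ) * μ).re = 1 + α * μ.re := by simp
    have him1 : ((1:ℂ) + (α:ℂ) * μ).im = α * μ.im := by simp
    have hμsq : ‖μ‖ ^ 2 = μ.re ^ 2 + μ.im ^ 2 := by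
      rw [Complex.sq_norm, Complex.normSq_apply]; ring
    have hsq : ‖(1:ℂ) + (α:ℂ) * μ‖ ^ 2 = 1 + 2 * α * μ.re + α ^ 2 * ‖μ‖ ^ 2 := by
      rw [Complex.sq_norm, Complex.normSq_apply, hre1, him1, hμsq]; ring
    have hlt : ‖(1:ℂ) + (α:ℂ) * μ‖ ^ 2 < 1 := by rw [hsq]; nlinarith
    nlinarith [norm_nonneg ((1:ℂ) + (α:ℂ) * μ)]
  refine ⟨hre', hpart2, ?_⟩
  by_cases hne : (specC (Hmat f pstar)).Nonempty
  · have hfin : (specC (Hmat f pstar)).Finite := Matrix.finite_spectrum _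
    set T := hfin.toFinset with hT
    have hTne : T.Nonempty := by rwa [hT, Set.Finite.toFinset_nonempty]
    set g : ℂ → ℝ := fun μ => -μ.re / ‖μ‖ ^ 2 with hg
    refine ⟨(T.image g).min' (hTne.image g), ?_, ?_⟩
    · rw [gt_iff_lt, Finset.lt_min'_iff]
      intro y hy
      obtain ⟨μ, hμT, rfl⟩ := Finset.mem_image.mp hy
      have hμ := (Set.Finite.mem_toFinset hfin).mp hμT
      have hμre := hre' μ hμ
      have hnorm : 0 < ‖μ‖ := by
        rw [norm_pos_iff]
        intro h; rw [h] at hμre; simp at hμre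
      exact div_pos (by linarith) (by positivity)
    · intro α hα hαβ ν hν
      refine le_of_lt (hpart2 α hα ?_ ν hν)
      intro μ hμ
      exact lt_of_lt_of_le hαβ
        (Finset.min'_le _ _ (Finset.mem_image_of_mem g ((hfin.mem_toFinset).mpr hμ)))
  · refine ⟨1, one_pos, ?_⟩
    intro α hα _ ν hν
    obtain ⟨μ, hμ, _⟩ := (specJ_mem (ne_of_gt hα)).mp hν
    exact absurd ⟨μ, hμ⟩ hne
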